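/- (Reconstruction.) Let α ∈ (-1,1), β⁻, β⁺ > 0, f : ℝ → ℝ, ξ, η ∈ ℝ, and g : ℝ × ℝ → ℝ. Suppose u₀ is twice differentiable on (-1,α) and (α,1) with β⁻·u₀'' = −f on (-1,α) and β⁺·u₀'' = −f on (α,1), is continuous on [-1,α) and (α,1] with u₀(-1) = ξ and u₀(1) = η, has one-sided limits of u₀ and u₀' at α with zero jump u₀⁺(α) − u₀⁻(α) = 0, and satisfies flux continuity lim_{x→α⁻} β⁻·u₀'(x) = lim_{x→α⁺} β⁺·u₀'(x). Suppose u₁ is twice differentiable with u₁'' = 0 on (-1,α) and (α,1), continuous on [-1,α) and (α,1] with u₁(-1) = u₁(1) = 0, with one-sided limits of u₁ and u₁' at α, unit jump u₁⁺(α) − u₁⁻(α) = 1, and flux continuity. Suppose s ∈ ℝ satisfies s = g(u₀⁺(α) + s·u₁⁺(α), u₀⁻(α) + s·u₁⁻(α)). Then u := u₀ + s·u₁ solves the full nonlinear interface problem: β⁻·u'' = −f on (-1,α) and β⁺·u'' = −f on (α,1), u(-1) = ξ, u(1) = η, flux continuity lim_{x→α⁻} β⁻·u'(x) = lim_{x→α⁺}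 β⁺·u'(x), and the nonlinear jump condition u⁺(α) − u⁻(α) = g(u⁺(α), u⁻(α)). -/

import Mathlib

open Set Filter


lemma stmt5_aux (a b : ℝ) (u₀ u₁ : ℝ → ℝ) (s : ℝ)
    (h0 : ∀ x ∈ Ioo a b, DifferentiableAt ℝ u₀ x ∧ DifferentiableAt ℝ (deriv u₀) x)
    (h1 : ∀ x ∈ Ioo a b, DifferentiableAt ℝ u₁ x ∧ DifferentiableAt ℝ (deriv u₁) x) :
    ∀ x ∈ Ioo a b, DifferentiableAt ℝ (fun y => u₀ y + s * u₁ y) x ∧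
      DifferentiableAt ℝ (deriv (fun y => u₀ y + s * u₁ y)) x ∧
      deriv (fun y => u₀ y + s * u₁ y) x = deriv u₀ x + s * deriv u₁ x ∧
      deriv (deriv (fun y => u₀ y + s * u₁ y)) x
        = deriv (deriv u₀) x + s * deriv (deriv u₁) x := by
  have hder : ∀ x ∈ Ioo a b, deriv (fun y => u₀ y + s * u₁ y) x = deriv u₀ x + s * deriv u₁ x := by
    intro x hx
    rw [deriv_fun_add (h0 x hx).1 ((h1 x hx).1.const_mul s), deriv_const_mul s (h1 x hx).1]
  intro x hx
  have hev : deriv (fun y => u₀ y + s * u₁ y) =ᶠ[nhds x] fun y => deriv u₀ y + s * deriv u₁ y := by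
    filter_upwards [isOpen_Ioo.mem_nhds hx] with y hy
    exact hder y hy
  have hd2 : DifferentiableAt ℝ (fun y => deriv u₀ y + s * deriv u₁ y) x :=
    (h0 x hx).2.add ((h1 x hx).2.const_mul s)
  refine ⟨(h0 x hx).1.add ((h1 x hx).1.const_mul s), hd2.congr_of_eventuallyEq hev,
    hder x hx, ?_⟩
  rw [hev.deriv_eq, deriv_fun_add (h0 x hx).2 ((h1 x hx).2.const_mul s),
    deriv_const_mul s (h1 x hx).2]

/-- Reconstruction: if `u₀` solves the zero-jump problem, `u₁` is the unit-jump response, and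
`s` solves the reduced scalar equation, then `u = u₀ + s·u₁` solves the full nonlinear
interface problem. -/
theorem stmt_5 (α βm βp : ℝ) (hα : α ∈ Ioo (-1 : ℝ) 1) (hβm : 0 < βm) (hβp : 0 < βp)
    (f : ℝ → ℝ) (ξ η : ℝ) (g : ℝ × ℝ → ℝ)
    (u₀ u₁ : ℝ → ℝ) (u0m u0p d0m d0p u1m u1p d1m d1p s : ℝ)
    -- u₀ solves the zero-jump problem
    (h0diff₁ : ∀ x ∈ Ioo (-1 : ℝ) α, DifferentiableAt ℝ u₀ x ∧ DifferentiableAt ℝ (deriv u₀) x ∧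
        βm * deriv (deriv u₀) x = -f x)
    (h0diff₂ : ∀ x ∈ Ioo α (1 : ℝ), DifferentiableAt ℝ u₀ x ∧ DifferentiableAt ℝ (deriv u₀) x ∧
        βp * deriv (deriv u₀) x = -f x)
    (h0cont₁ : ContinuousOn u₀ (Ico (-1 : ℝ) α))
    (h0cont₂ : ContinuousOn u₀ (Ioc α (1 : ℝ)))
    (h0bc₁ : u₀ (-1) = ξ) (h0bc₂ : u₀ 1 = η)
    (h0m : Tendsto u₀ (nhdsWithin α (Ioo (-1 : ℝ) α)) (nhds u0m))
    (h0p : Tendsto u₀ (nhdsWithin α (Ioo α (1 : ℝ))) (nhds u0p))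
    (hd0m : Tendsto (deriv u₀) (nhdsWithin α (Ioo (-1 : ℝ) α)) (nhds d0m))
    (hd0p : Tendsto (deriv u₀) (nhdsWithin α (Ioo α (1 : ℝ))) (nhds d0p))
    (h0jump : u0p - u0m = 0)
    (h0flux : βm * d0m = βp * d0p)
    -- u₁ is the unit-jump response
    (h1diff₁ : ∀ x ∈ Ioo (-1 : ℝ) α, DifferentiableAt ℝ u₁ x ∧ DifferentiableAt ℝ (deriv u₁) x ∧
        deriv (deriv u₁) x = 0)
    (h1diff₂ : ∀ x ∈ Ioo α (1 : ℝ), DifferentiableAt ℝ u₁ x ∧ DifferentiableAt ℝ (deriv u₁) x ∧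
        deriv (deriv u₁) x = 0)
    (h1cont₁ : ContinuousOn u₁ (Ico (-1 : ℝ) α))
    (h1cont₂ : ContinuousOn u₁ (Ioc α (1 : ℝ)))
    (h1bc₁ : u₁ (-1) = 0) (h1bc₂ : u₁ 1 = 0)
    (h1m : Tendsto u₁ (nhdsWithin α (Ioo (-1 : ℝ) α)) (nhds u1m))
    (h1p : Tendsto u₁ (nhdsWithin α (Ioo α (1 : ℝ))) (nhds u1p))
    (hd1m : Tendsto (deriv u₁) (nhdsWithin α (Ioo (-1 : ℝ) α)) (nhds d1m))
    (hd1p : Tendsto (deriv u₁) (nhdsWithin α (Ioo α (1 : ℝ))) (nhds d1p))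
    (h1jump : u1p - u1m = 1)
    (h1flux : βm * d1m = βp * d1p)
    -- s solves the reduced scalar interface equation
    (hs : s = g (u0p + s * u1p, u0m + s * u1m))
    -- the reconstructed solution
    (u : ℝ → ℝ) (hu : ∀ x, u x = u₀ x + s * u₁ x) :
    -- u solves the differential equation in each subdomain
    (∀ x ∈ Ioo (-1 : ℝ) α, DifferentiableAt ℝ u x ∧ DifferentiableAt ℝ (deriv u) x ∧
        βm * deriv (deriv u) x = -f x) ∧
    (∀ x ∈ Ioo α (1 : ℝ), DifferentiableAt ℝ u x ∧ DifferentiableAt ℝ (deriv u) x ∧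
        βp * deriv (deriv u) x = -f x) ∧
    -- boundary conditions
    (u (-1) = ξ ∧ u 1 = η) ∧
    -- flux continuity at α
    (∃ F : ℝ,
      Tendsto (fun x => βm * deriv u x) (nhdsWithin α (Ioo (-1 : ℝ) α)) (nhds F) ∧
      Tendsto (fun x => βp * deriv u x) (nhdsWithin α (Ioo α (1 : ℝ))) (nhds F)) ∧
    -- nonlinear jump condition
    (∃ um up : ℝ,
      Tendsto u (nhdsWithin α (Ioo (-1 : ℝ) α)) (nhds um) ∧
      Tendsto u (nhdsWithin α (Ioo α (1 : ℝ))) (nhds up) ∧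
      up - um = g (up, um)) := by

  have hufun : u = fun y => u₀ y + s * u₁ y := funext hu
  subst hufun
  have haux₁ := stmt5_aux (-1) α u₀ u₁ s
    (fun x hx => ⟨(h0diff₁ x hx).1, (h0diff₁ x hx).2.1⟩)
    (fun x hx => ⟨(h1diff₁ x hx).1, (h1diff₁ x hx).2.1⟩)
  have haux₂ := stmt5_aux α 1 u₀ u₁ s
    (fun x hx => ⟨(h0diff₂ x hx).1, (h0diff₂ x hx).2.1⟩)
    (fun x hx => ⟨(h1diff₂ x hx).1, (h1diff₂ x hx).2.1⟩)
  refine ⟨?_, ?_, ⟨by simp [h0bc₁, h1bc₁], by simp [h0bc₂, h1bc₂]⟩, ?_, ?_⟩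
  · intro x hx
    obtain ⟨hA, hB, hC, hD⟩ := haux₁ x hx
    refine ⟨hA, hB, ?_⟩
    rw [hD, (h1diff₁ x hx).2.2]
    simpa using (h0diff₁ x hx).2.2
  · intro x hx
    obtain ⟨hA, hB, hC, hD⟩ := haux₂ x hx
    refine ⟨hA, hB, ?_⟩
    rw [hD, (h1diff₂ x hx).2.2]
    simpa using (h0diff₂ x hx).2.2
  · refine ⟨βm * (d0m + s * d1m), ?_, ?_⟩
    · have h := ((hd0m.add (hd1m.const_mul s)).const_mul βm)
      refine h.congr' ?_
      filter_upwards [self_mem_nhdsWithin] with x hx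
      rw [(haux₁ x hx).2.2.1]
    · have h := ((hd0p.add (hd1p.const_mul s)).const_mul βp)
      have heqF : βp * (d0p + s * d1p) = βm * (d0m + s * d1m) := by
        linear_combination -h0flux - s * h1flux
      rw [← heqF]
      refine h.congr' ?_
      filter_upwards [self_mem_nhdsWithin] with x hx
      rw [(haux₂ x hx).2.2.1]
  · refine ⟨u0m + s * u1m, u0p + s * u1p, h0m.add (h1m.const_mul s),
      h0p.add (h1p.const_mul s), ?_⟩
    have hjump : (u0p + s * u1p) - (u0m + s * u1m) = s := by
      linear_combination h0jump + s * h1jump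
    rw [hjump]; exact hs
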